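/- (Bounded perturbation resilience of the PC-algorithm I.) Let ν ∈ (0,1) and γ ∈ (0,2). Let {v^k} be a bounded sequence in H and {λ_k} nonnegative reals with Σ_{k=0}^∞ λ_k < +∞. Let x^0 ∈ H and let {x^k}, {y^k}, {β_k} satisfy, for every k ≥ 0, with w^k := x^k + λ_k v^k: β_k > 0 with inf_k β_k > 0; y^k = P_C(w^k − β_k F(w^k)); β_k‖F(w^k) − F(y^k)‖ ≤ ν‖w^k − y^k‖; d^k := (w^k − y^k) − β_k(F(w^k) − F(y^k)) ≠ 0; ρ_k := ⟨w^k − y^k, d^k⟩/‖d^k‖²; and x^{k+1} = w^k − γ ρ_k d^k. Then {x^k} converges weakly (i.e., ⟨x^k, u⟩ → ⟨x̂, u⟩ for every u ∈ H) to some point x̂ ∈ SOL(C,F). -/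

import Mathlib

open RealInnerProductSpace
open Filter Topology

section AuxPC10

lemma PC10.qfejer {a e : ℕ → ℝ} (ha : ∀ k, 0 ≤ a k) (he : ∀ k, 0 ≤ e k)
    (hsum : Summable e) (hrec : ∀ k, a (k+1) ≤ a k + e k) :
    ∃ l, Tendsto a atTop (𝓝 l) := by
  set T : ℕ → ℝ := fun k => ∑' j, e (j + k) with hT
  have hTt : Tendsto T atTop (𝓝 0) := tendsto_sum_nat_add e
  have hTrec : ∀ k, T k = e k + T (k + 1) := by
    intro k
    have hs : Summable fun j => e (j + k) := (summable_nat_add_iff k).2 hsum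
    have h0 := Summable.tsum_eq_zero_add hs
    have h1 : (fun j => e (j + 1 + k)) = fun j => e (j + (k + 1)) := by
      funext j; congr 1; omega
    simp only [hT, zero_add] at h0 ⊢
    rw [h0, h1]
  have hanti : Antitone fun k => a k + T k := by
    apply antitone_nat_of_succ_le
    intro k
    have := hrec k
    have := hTrec k
    linarith
  rcases tendsto_of_antitone hanti with h | ⟨l, hl⟩
  · exfalso
    have hb : ∀ k, (0:ℝ) ≤ a k + T k := by
      intro k
      have : 0 ≤ T k := tsum_nonneg fun j => he _
      linarith [ha k]
    obtain ⟨k, hk⟩ := (tendsto_atBot.1 h (-1)).exists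
    linarith [hb k]
  · refine ⟨l, ?_⟩
    have : Tendsto (fun k => a k + T k - T k) atTop (𝓝 (l - 0)) := hl.sub hTt
    simpa using this

lemma PC10.sumslack {a e b : ℕ → ℝ} (ha0 : ∀ k, 0 ≤ a k) (he : ∀ k, 0 ≤ e k)
    (hb : ∀ k, 0 ≤ b k)
    {R : ℝ} (haR : ∀ k, a k ≤ R) (heR : ∀ k, e k ≤ R)
    (hsum : Summable e) (hrec : ∀ k, a (k+1)^2 + b k ≤ (a k + e k)^2) :
    Summable b := by
  have hR0 : 0 ≤ R := le_trans (ha0 0) (haR 0)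
  apply summable_of_sum_range_le hb (c := a 0 ^ 2 + 3*R*(∑' k, e k))
  intro n
  have key : ∀ k, b k ≤ a k^2 - a (k+1)^2 + 3*R*e k := by
    intro k
    nlinarith [hrec k, ha0 k, he k, haR k, heR k,
      mul_le_mul_of_nonneg_right (haR k) (he k), mul_le_mul_of_nonneg_right (heR k) (he k)]
  calc ∑ i ∈ Finset.range n, b i
      ≤ ∑ i ∈ Finset.range n, (a i^2 - a (i+1)^2 + 3*R*e i) :=
        Finset.sum_le_sum fun i _ => key i
    _ = (a 0^2 - a n^2) + 3*R * ∑ i ∈ Finset.range n, e i := by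
        rw [Finset.sum_add_distrib, Finset.sum_range_sub' (fun i => a i ^ 2) n, ← Finset.mul_sum]
    _ ≤ a 0^2 + 3*R*(∑' k, e k) := by
        have h1 : ∑ i ∈ Finset.range n, e i ≤ ∑' k, e k :=
          hsum.sum_le_tsum (Finset.range n) (fun i _ => he i)
        nlinarith [sq_nonneg (a n), mul_le_mul_of_nonneg_left h1 (by positivity : (0:ℝ) ≤ 3*R)]

lemma PC10.sq_le_imp {s t : ℝ} (hs : 0 ≤ s) (ht : 0 ≤ t) (h : s^2 ≤ t^2) : s ≤ t := by
  nlinarith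

variable {H : Type*} [NormedAddCommGroup H] [InnerProductSpace ℝ H]

lemma PC10.phi_lb {ν β : ℝ} {s g : H} (hβ : 0 < β) (hst : β * ‖g‖ ≤ ν * ‖s‖) :
    (1 - ν) * ‖s‖^2 ≤ ⟪s, s - β • g⟫ := by
  rw [inner_sub_right, real_inner_smul_right, real_inner_self_eq_norm_sq]
  have h1 : ⟪s, g⟫ ≤ ‖s‖ * ‖g‖ := real_inner_le_norm s g
  nlinarith [norm_nonneg s, norm_nonneg g,
    mul_le_mul_of_nonneg_left h1 hβ.le,
    mul_le_mul_of_nonneg_left hst (norm_nonneg s)]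

lemma PC10.d_ub {ν β : ℝ} {s g : H} (hβ : 0 < β) (hst : β * ‖g‖ ≤ ν * ‖s‖) :
    ‖s - β • g‖ ≤ (1 + ν) * ‖s‖ := by
  calc ‖s - β • g‖ ≤ ‖s‖ + ‖β • g‖ := norm_sub_le _ _
    _ = ‖s‖ + β * ‖g‖ := by rw [norm_smul, Real.norm_eq_abs, abs_of_pos hβ]
    _ ≤ ‖s‖ + ν * ‖s‖ := by linarith
    _ = (1 + ν) * ‖s‖ := by ring

lemma PC10.yqd_nonneg {β : ℝ} {wv yv q Fw Fy Fq : H} (hβ : 0 < β)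
    (hproj : ⟪(wv - β • Fw) - yv, q - yv⟫ ≤ 0)
    (hmono1 : 0 ≤ ⟪Fy - Fq, yv - q⟫)
    (hsol : 0 ≤ ⟪Fq, yv - q⟫) :
    0 ≤ ⟪yv - q, (wv - yv) - β • (Fw - Fy)⟫ := by
  have hsplit : ⟪yv - q, (wv - yv) - β • (Fw - Fy)⟫
      = ⟪yv - q, (wv - β • Fw) - yv⟫ + β * ⟪yv - q, Fy⟫ := by
    have hv : (wv - yv) - β • (Fw - Fy) = ((wv - β • Fw) - yv) + β • Fy := by module
    rw [hv, inner_add_right, real_inner_smul_right]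
  have hterm1 : 0 ≤ ⟪yv - q, (wv - β • Fw) - yv⟫ := by
    have hc : ⟪yv - q, (wv - β • Fw) - yv⟫ = -⟪(wv - β • Fw) - yv, q - yv⟫ := by
      rw [real_inner_comm, show q - yv = -(yv - q) from (neg_sub yv q).symm, inner_neg_right,
        neg_neg, real_inner_comm]
    rw [hc]; linarith
  have hterm2 : 0 ≤ ⟪yv - q, Fy⟫ := by
    have hc : ⟪Fy - Fq, yv - q⟫ + ⟪Fq, yv - q⟫ = ⟪yv - q, Fy⟫ := by
      rw [inner_sub_left, real_inner_comm (yv - q) Fy]; ring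
    linarith
  have := mul_nonneg hβ.le hterm2
  linarith

lemma PC10.fejer_step {γ ρw : ℝ} {wv yv dv q : H}
    (hγ0 : 0 < γ)
    (hdne : dv ≠ 0)
    (hρ : ρw = ⟪wv - yv, dv⟫ / ‖dv‖^2)
    (hφpos : 0 < ⟪wv - yv, dv⟫)
    (hyqd : 0 ≤ ⟪yv - q, dv⟫) :
    ‖(wv - (γ*ρw) • dv) - q‖^2 + γ*(2-γ)*(ρw * ⟪wv - yv, dv⟫) ≤ ‖wv - q‖^2 := by
  set φ := ⟪wv - yv, dv⟫ with hφ
  have hdn : (0:ℝ) < ‖dv‖^2 := pow_pos (norm_pos_iff.2 hdne) 2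
  have hρd : ρw * ‖dv‖^2 = φ := by rw [hρ]; field_simp
  have hρpos : 0 < ρw := by rw [hρ]; exact div_pos hφpos hdn
  have hwqd : φ ≤ ⟪wv - q, dv⟫ := by
    have hv : wv - q = (wv - yv) + (yv - q) := by module
    rw [hv, inner_add_left]; linarith
  have hexp : ‖(wv - (γ*ρw) • dv) - q‖^2
      = ‖wv - q‖^2 - 2*((γ*ρw)*⟪wv - q, dv⟫) + (γ*ρw)^2*‖dv‖^2 := by
    have hv : (wv - (γ*ρw) • dv) - q = (wv - q) - (γ*ρw) • dv := by module
    rw [hv, norm_sub_sq_real, real_inner_smul_right, norm_smul, Real.norm_eq_abs,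
      mul_pow, sq_abs]
  have h5 : (γ*ρw)^2 * ‖dv‖^2 = γ^2 * (ρw * φ) := by
    rw [← hρd]; ring
  have h6 : 0 ≤ (γ*ρw) * (⟪wv - q, dv⟫ - φ) :=
    mul_nonneg (mul_nonneg hγ0.le hρpos.le) (sub_nonneg.2 hwqd)
  nlinarith [mul_pos hρpos hφpos]

lemma PC10.minty_step {b β L D : ℝ} {wv yv z Fw Fy Fz : H}
    (hb0 : 0 < b) (hbβ : b ≤ β) (hL : 0 < L)
    (hproj : ⟪(wv - β • Fw) - yv, z - yv⟫ ≤ 0)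
    (hmono : 0 ≤ ⟪Fz - Fy, z - yv⟫)
    (hlip : ‖Fw - Fy‖ ≤ L * ‖wv - yv‖)
    (hD : ‖z - yv‖ ≤ D) :
    -((1/b + L) * D * ‖wv - yv‖) ≤ ⟪Fz, z - yv⟫ := by
  set t := ‖wv - yv‖ with ht
  set u := z - yv with hu
  have ht0 : 0 ≤ t := norm_nonneg _
  have hD0 : 0 ≤ D := le_trans (norm_nonneg _) hD
  have hβ0 : 0 < β := lt_of_lt_of_le hb0 hbβ
  have hA : ⟪wv - yv, u⟫ ≤ β * ⟪Fw, u⟫ := by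
    have hv : (wv - β • Fw) - yv = (wv - yv) - β • Fw := by module
    rw [hv, inner_sub_left, real_inner_smul_left] at hproj
    linarith
  have h1 : ⟪Fy, u⟫ ≤ ⟪Fz, u⟫ := by
    rw [inner_sub_left] at hmono; linarith
  have habs1 : -(t*D) ≤ ⟪wv - yv, u⟫ := by
    have := abs_real_inner_le_norm (wv - yv) u
    have h2 : t * ‖u‖ ≤ t * D := mul_le_mul_of_nonneg_left hD ht0
    have := abs_le.1 this
    nlinarith [abs_le.1 (abs_real_inner_le_norm (wv - yv) u)]
  have habs2 : ⟪Fw - Fy, u⟫ ≤ L * (t * D) := by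
    have h3 : ⟪Fw - Fy, u⟫ ≤ ‖Fw - Fy‖ * ‖u‖ := real_inner_le_norm _ _
    have h4 : ‖Fw - Fy‖ * ‖u‖ ≤ (L * t) * D :=
      mul_le_mul hlip hD (norm_nonneg _) (by positivity)
    nlinarith
  have hFw : -(t*D) ≤ b * ⟪Fw, u⟫ := by
    rcases le_or_gt 0 ⟪Fw, u⟫ with h | h
    · nlinarith
    · nlinarith
  have h2 : ⟪Fw, u⟫ - ⟪Fw - Fy, u⟫ = ⟪Fy, u⟫ := by
    rw [inner_sub_left]; ring
  have hbz : -(t*D) - b*(L*(t*D)) ≤ b * ⟪Fz, u⟫ := by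
    nlinarith [mul_le_mul_of_nonneg_left h1 hb0.le,
      mul_le_mul_of_nonneg_left habs2 hb0.le]
  have hrw : ⟪Fz, u⟫ = (1/b) * (b * ⟪Fz, u⟫) := by field_simp
  have h5 : (1/b) * (-(t*D) - b*(L*(t*D))) ≤ (1/b) * (b * ⟪Fz, u⟫) :=
    mul_le_mul_of_nonneg_left hbz (by positivity)
  have h6 : (1/b) * (-(t*D) - b*(L*(t*D))) = -((1/b + L) * D * t) := by
    field_simp; ring
  rw [hrw]
  rw [h6] at h5
  exact h5

lemma PC10.minty_final {C : Set H} (hCcv : Convex ℝ C) {F : H → H} {L : ℝ}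
    (hlip : ∀ u v : H, ‖F u - F v‖ ≤ L * ‖u - v‖) {q : H} (hq : q ∈ C)
    (hineq : ∀ z ∈ C, 0 ≤ ⟪F z, z - q⟫) :
    ∀ z ∈ C, 0 ≤ ⟪F q, z - q⟫ := by
  intro z hz
  set c : ℕ → ℝ := fun n => 1/(n+1 : ℝ) with hc
  have hc0 : ∀ n, 0 < c n := fun n => by positivity
  have hc1 : ∀ n, c n ≤ 1 := fun n => by
    rw [hc]; rw [div_le_one (by positivity)]; simp
  set zn : ℕ → H := fun n => q + c n • (z - q) with hzn
  have hznC : ∀ n, zn n ∈ C := by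
    intro n
    have h := hCcv hq hz (by linarith [hc1 n] : (0:ℝ) ≤ 1 - c n) (hc0 n).le (by ring)
    have : (1 - c n) • q + c n • z = q + c n • (z - q) := by module
    rwa [this] at h
  have h1 : ∀ n, 0 ≤ ⟪F (zn n), z - q⟫ := by
    intro n
    have h := hineq (zn n) (hznC n)
    have h2 : zn n - q = c n • (z - q) := by rw [hzn]; module
    rw [h2, real_inner_smul_right] at h
    exact nonneg_of_mul_nonneg_right h (hc0 n)
  have hzq : Tendsto (fun n => zn n) atTop (𝓝 q) := by
    have h0 : Tendsto (fun n => c n • (z - q)) atTop (𝓝 0) := by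
      refine squeeze_zero_norm (f := fun n => c n • (z - q))
        (a := fun n => (1/(n+1:ℝ)) * ‖z - q‖) (fun n => ?_) ?_
      · rw [norm_smul, Real.norm_eq_abs, abs_of_pos (hc0 n)]
      · have := tendsto_one_div_add_atTop_nhds_zero_nat.mul_const ‖z - q‖
        simpa using this
    have := h0.const_add q
    simpa using this
  have hFzn : Tendsto (fun n => F (zn n)) atTop (𝓝 (F q)) := by
    have h0 : Tendsto (fun n => F (zn n) - F q) atTop (𝓝 0) := by
      refine squeeze_zero_norm (f := fun n => F (zn n) - F q)
        (a := fun n => L * ‖zn n - q‖) (fun n => hlip (zn n) q) ?_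
      · have h3 : Tendsto (fun n => ‖zn n - q‖) atTop (𝓝 0) := by
          have := (hzq.sub (tendsto_const_nhds (x := q))).norm
          simpa using this
        have := h3.const_mul L
        simpa using this
    have := h0.add (tendsto_const_nhds (x := F q))
    simpa using this
  have h2 : Tendsto (fun n => ⟪F (zn n), z - q⟫) atTop (𝓝 ⟪F q, z - q⟫) :=
    hFzn.inner tendsto_const_nhds
  exact ge_of_tendsto h2 (Eventually.of_forall h1)

lemma PC10.tendsto_of_unique_clusterPt {X : Type*} [TopologicalSpace X] {u : ℕ → X} {s : Set X}
    (hs : IsCompact s) (hmem : ∀ k, u k ∈ s) {a : X}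
    (huniq : ∀ c, MapClusterPt c atTop u → c = a) :
    Tendsto u atTop (𝓝 a) := by
  by_contra h
  obtain ⟨s', hs', hns'⟩ : ∃ s' ∈ 𝓝 a, ¬ ∀ᶠ k in atTop, u k ∈ s' := by
    by_contra h2
    push_neg at h2
    exact h (fun s' hs' => h2 s' hs')
  have hfreq : ∃ᶠ k in atTop, u k ∈ (interior s')ᶜ := by
    have := not_eventually.1 hns'
    exact this.mono fun k hk hU => hk (interior_subset hU)
  set l : Filter ℕ := atTop ⊓ 𝓟 (u ⁻¹' (interior s')ᶜ) with hl
  have hlne : l.NeBot := frequently_iff_neBot.1 hfreq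
  have hmaps : map u l ≤ 𝓟 s := by
    refine le_trans (map_mono inf_le_left) ?_
    rw [le_principal_iff, mem_map]
    exact Eventually.of_forall hmem
  obtain ⟨c, hcs, hc⟩ := hs.exists_clusterPt hmaps
  have hcc : MapClusterPt c atTop u := hc.mono (map_mono inf_le_left)
  have hcint : c ∈ (interior s')ᶜ := by
    have h1 : map u l ≤ 𝓟 ((interior s')ᶜ) := by
      rw [le_principal_iff, mem_map]
      exact mem_inf_of_right (mem_principal_self _)
    have h2 : ClusterPt c (𝓟 ((interior s')ᶜ)) := hc.mono h1
    have := mem_closure_iff_clusterPt.2 h2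
    rwa [IsClosed.closure_eq isOpen_interior.isClosed_compl] at this
  exact hcint (huniq c hcc ▸ mem_interior_iff_mem_nhds.2 hs')

end AuxPC10

set_option maxHeartbeats 2000000 in
theorem stmt_10 {H : Type*} [NormedAddCommGroup H] [InnerProductSpace ℝ H]
    [CompleteSpace H]
    (C : Set H) (hCne : C.Nonempty) (hCcl : IsClosed C) (hCcv : Convex ℝ C)
    (P : H → H) (hPmem : ∀ u : H, P u ∈ C)
    (hPchar : ∀ u : H, ∀ c ∈ C, ⟪u - P u, c - P u⟫ ≤ 0)
    (F : H → H) (hmono : ∀ u v : H, 0 ≤ ⟪F u - F v, u - v⟫)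
    (L : ℝ) (hL : 0 < L) (hLip : ∀ u v : H, ‖F u - F v‖ ≤ L * ‖u - v‖)
    (hSOL : ∃ p ∈ C, ∀ z ∈ C, 0 ≤ ⟪F p, z - p⟫)
    (ν γ : ℝ) (hν : ν ∈ Set.Ioo (0 : ℝ) 1) (hγ : γ ∈ Set.Ioo (0 : ℝ) 2)
    (v : ℕ → H) (hv : ∃ M : ℝ, ∀ k, ‖v k‖ ≤ M)
    (lam : ℕ → ℝ) (hlam : ∀ k, 0 ≤ lam k) (hlamsum : Summable lam)
    (x y w : ℕ → H) (β : ℕ → ℝ) (d : ℕ → H) (ρ : ℕ → ℝ)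
    (hw : ∀ k, w k = x k + lam k • v k)
    (hβpos : ∀ k, 0 < β k) (hβinf : ∃ b > (0 : ℝ), ∀ k, b ≤ β k)
    (hy : ∀ k, y k = P (w k - β k • F (w k)))
    (hstep : ∀ k, β k * ‖F (w k) - F (y k)‖ ≤ ν * ‖w k - y k‖)
    (hd : ∀ k, d k = (w k - y k) - β k • (F (w k) - F (y k)))
    (hdne : ∀ k, d k ≠ 0)
    (hρ : ∀ k, ρ k = ⟪w k - y k, d k⟫ / ‖d k‖ ^ 2)
    (hx : ∀ k, x (k + 1) = w k - (γ * ρ k) • d k) :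
    ∃ xhat, (xhat ∈ C ∧ ∀ z ∈ C, 0 ≤ ⟪F xhat, z - xhat⟫) ∧
      ∀ u : H, Filter.Tendsto (fun k => ⟪x k, u⟫) Filter.atTop (nhds ⟪xhat, u⟫) := by
  classical
  obtain ⟨hν0, hν1⟩ := hν
  obtain ⟨hγ0, hγ2⟩ := hγ
  obtain ⟨p, hpC, hp⟩ := hSOL
  obtain ⟨M0, hM0⟩ := hv
  obtain ⟨b, hb0, hbβ⟩ := hβinf
  set M : ℝ := max M0 0 with hM
  have hMv : ∀ k, ‖v k‖ ≤ M := fun k => le_trans (hM0 k) (le_max_left _ _)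
  have hM0' : (0:ℝ) ≤ M := le_max_right _ _
  set e : ℕ → ℝ := fun k => lam k * M with he_def
  have he0 : ∀ k, 0 ≤ e k := fun k => mul_nonneg (hlam k) hM0'
  have hesum : Summable e := hlamsum.mul_right M
  have hyC : ∀ k, y k ∈ C := fun k => by rw [hy k]; exact hPmem _
  -- w - y ≠ 0
  have hwy0 : ∀ k, w k - y k ≠ 0 := by
    intro k hk
    have hky : w k = y k := by rwa [sub_eq_zero] at hk
    apply hdne k
    rw [hd k, hky]
    simp
  have ht_pos : ∀ k, 0 < ‖w k - y k‖ := fun k => norm_pos_iff.2 (hwy0 k)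
  have hφ_ge : ∀ k, (1 - ν) * ‖w k - y k‖^2 ≤ ⟪w k - y k, d k⟫ := by
    intro k; rw [hd k]; exact PC10.phi_lb (hβpos k) (hstep k)
  have hφ_pos : ∀ k, 0 < ⟪w k - y k, d k⟫ := by
    intro k
    have h1 := hφ_ge k
    nlinarith [h1, mul_pos (show (0:ℝ) < 1 - ν by linarith) (pow_pos (ht_pos k) 2)]
  set r : ℝ := (1-ν)/(1+ν)^2 with hr
  have hr_pos : 0 < r := by
    rw [hr]; exact div_pos (by linarith) (by positivity)
  have hd_ub : ∀ k, ‖d k‖ ≤ (1+ν) * ‖w k - y k‖ := fun k => by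
    rw [hd k]; exact PC10.d_ub (hβpos k) (hstep k)
  have hρ_ge : ∀ k, r ≤ ρ k := by
    intro k
    have hdn : (0:ℝ) < ‖d k‖^2 := pow_pos (norm_pos_iff.2 (hdne k)) 2
    rw [hρ k, le_div_iff₀ hdn]
    have hsq : ‖d k‖^2 ≤ (1+ν)^2 * ‖w k - y k‖^2 := by
      nlinarith [hd_ub k, norm_nonneg (d k), norm_nonneg (w k - y k)]
    have hr1 : r * (1+ν)^2 = 1 - ν := by rw [hr]; field_simp
    nlinarith [hφ_ge k, mul_le_mul_of_nonneg_left hsq hr_pos.le]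
  -- Fejér inequality for solutions
  have fejer : ∀ q, q ∈ C → (∀ z ∈ C, 0 ≤ ⟪F q, z - q⟫) → ∀ k,
      ‖x (k+1) - q‖^2 + γ*(2-γ)*(ρ k * ⟪w k - y k, d k⟫) ≤ ‖w k - q‖^2 := by
    intro q hqC hqsol k
    have hproj := hPchar (w k - β k • F (w k)) q hqC
    rw [← hy k] at hproj
    have hyqd : 0 ≤ ⟪y k - q, d k⟫ := by
      rw [hd k]
      exact PC10.yqd_nonneg (hβpos k) hproj (hmono (y k) q) (hqsol (y k) (hyC k))
    have h1 := PC10.fejer_step (q := q) hγ0 (hdne k) (hρ k) (hφ_pos k) hyqd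
    rw [hx k]
    exact h1
  have hbbge0 : ∀ k, 0 ≤ γ*(2-γ)*(ρ k * ⟪w k - y k, d k⟫) := by
    intro k
    have h1 : 0 ≤ ρ k := le_trans hr_pos.le (hρ_ge k)
    have h2 := (hφ_pos k).le
    have h3 : (0:ℝ) ≤ γ*(2-γ) := by nlinarith
    exact mul_nonneg h3 (mul_nonneg h1 h2)
  have hwq : ∀ (q : H) (k : ℕ), ‖w k - q‖ ≤ ‖x k - q‖ + e k := by
    intro q k
    rw [hw k]
    calc ‖x k + lam k • v k - q‖ = ‖(x k - q) + lam k • v k‖ := by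
          congr 1; module
      _ ≤ ‖x k - q‖ + ‖lam k • v k‖ := norm_add_le _ _
      _ ≤ ‖x k - q‖ + e k := by
          rw [norm_smul, Real.norm_eq_abs, abs_of_nonneg (hlam k)]
          exact add_le_add_right (mul_le_mul_of_nonneg_left (hMv k) (hlam k)) _
  have hxq_succ : ∀ q, q ∈ C → (∀ z ∈ C, 0 ≤ ⟪F q, z - q⟫) →
      ∀ k, ‖x (k+1) - q‖ ≤ ‖x k - q‖ + e k := by
    intro q hqC hqsol k
    have h1 := fejer q hqC hqsol k
    have h2 : ‖x (k+1) - q‖^2 ≤ ‖w k - q‖^2 := by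
      have := hbbge0 k
      linarith
    have h3 : ‖x (k+1) - q‖ ≤ ‖w k - q‖ :=
      PC10.sq_le_imp (norm_nonneg _) (norm_nonneg _) h2
    exact le_trans h3 (hwq q k)
  have hlim : ∀ q, q ∈ C → (∀ z ∈ C, 0 ≤ ⟪F q, z - q⟫) →
      ∃ l, Tendsto (fun k => ‖x k - q‖) atTop (𝓝 l) := by
    intro q hqC hqsol
    exact PC10.qfejer (fun k => norm_nonneg _) he0 hesum (hxq_succ q hqC hqsol)
  -- bounds
  obtain ⟨lp, hlp⟩ := hlim p hpC hp
  obtain ⟨R, hRmem⟩ := hlp.bddAbove_range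
  have hRb : ∀ k, ‖x k - p‖ ≤ R := fun k => hRmem (Set.mem_range_self k)
  have hR0 : (0:ℝ) ≤ R := le_trans (norm_nonneg _) (hRb 0)
  set E := ∑' k, e k with hE
  have heE : ∀ k, e k ≤ E := fun k => hesum.le_tsum k (fun j _ => he0 j)
  set R' := max R E with hR'
  -- summability of the slack
  set bb : ℕ → ℝ := fun k => γ*(2-γ)*(ρ k * ⟪w k - y k, d k⟫) with hbb
  have hbbsum : Summable bb := by
    apply PC10.sumslack (a := fun k => ‖x k - p‖) (e := e)
      (fun k => norm_nonneg _) he0 hbbge0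
      (R := R') (fun k => le_trans (hRb k) (le_max_left _ _))
      (fun k => le_trans (heE k) (le_max_right _ _)) hesum
    intro k
    have h1 := fejer p hpC hp k
    have h2 : ‖w k - p‖^2 ≤ (‖x k - p‖ + e k)^2 := by
      nlinarith [hwq p k, norm_nonneg (w k - p), norm_nonneg (x k - p), he0 k]
    show ‖x (k+1) - p‖^2 + γ*(2-γ)*(ρ k * ⟪w k - y k, d k⟫) ≤ (‖x k - p‖ + e k)^2
    linarith
  have hbbz : Tendsto bb atTop (𝓝 0) := hbbsum.tendsto_atTop_zero
  -- t → 0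
  set t : ℕ → ℝ := fun k => ‖w k - y k‖ with htt
  have hcpos : (0:ℝ) < γ*(2-γ)*(r*(1-ν)) := by
    have h1 : (0:ℝ) < γ*(2-γ) := by nlinarith
    have h2 : (0:ℝ) < r*(1-ν) := mul_pos hr_pos (by linarith)
    exact mul_pos h1 h2
  have hbb_ge : ∀ k, γ*(2-γ)*(r*(1-ν)) * t k^2 ≤ bb k := by
    intro k
    have h1 : r * ((1-ν) * t k^2) ≤ ρ k * ⟪w k - y k, d k⟫ := by
      nlinarith [mul_le_mul_of_nonneg_left (hφ_ge k) hr_pos.le,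
        mul_le_mul_of_nonneg_right (hρ_ge k) (hφ_pos k).le]
    have h3 : (0:ℝ) ≤ γ*(2-γ) := by nlinarith
    show γ*(2-γ)*(r*(1-ν)) * t k^2 ≤ γ*(2-γ)*(ρ k * ⟪w k - y k, d k⟫)
    nlinarith [mul_le_mul_of_nonneg_left h1 h3]
  have ht0 : Tendsto t atTop (𝓝 0) := by
    have hsq : Tendsto (fun k => t k^2) atTop (𝓝 0) := by
      apply squeeze_zero (fun k => sq_nonneg _) (fun k => ?_)
        (g := fun k => bb k / (γ*(2-γ)*(r*(1-ν))))
      · have := hbbz.div_const (γ*(2-γ)*(r*(1-ν)))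
        simpa using this
      · rw [le_div_iff₀ hcpos]
        nlinarith [hbb_ge k]
    have h1 : Tendsto (fun k => Real.sqrt (t k^2)) atTop (𝓝 (Real.sqrt 0)) :=
      (Real.continuous_sqrt.tendsto 0).comp hsq
    have h2 : (fun k => Real.sqrt (t k^2)) = t := by
      funext k; rw [Real.sqrt_sq (norm_nonneg _)]
    rw [h2] at h1
    simpa using h1
  -- strong null sequences
  have hez : Tendsto e atTop (𝓝 0) := hesum.tendsto_atTop_zero
  have hwx : Tendsto (fun k => w k - x k) atTop (𝓝 0) := by
    refine squeeze_zero_norm (f := fun k => w k - x k) (a := e) (fun k => ?_) hez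
    show ‖w k - x k‖ ≤ e k
    rw [hw k]
    have : x k + lam k • v k - x k = lam k • v k := by module
    rw [this, norm_smul, Real.norm_eq_abs, abs_of_nonneg (hlam k)]
    exact mul_le_mul_of_nonneg_left (hMv k) (hlam k)
  have hyw : Tendsto (fun k => y k - w k) atTop (𝓝 0) := by
    refine squeeze_zero_norm (f := fun k => y k - w k) (a := t) (fun k => ?_) ht0
    show ‖y k - w k‖ ≤ t k
    rw [norm_sub_rev]
  have hyx : Tendsto (fun k => y k - x k) atTop (𝓝 0) := by
    have := hyw.add hwx
    have h2 : (fun k => (y k - w k) + (w k - x k)) = fun k => y k - x k := by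
      funext k; module
    rw [h2] at this
    simpa using this
  -- bound on ‖y k‖
  obtain ⟨Tb, hTbmem⟩ := ht0.bddAbove_range
  have hTb : ∀ k, t k ≤ Tb := fun k => hTbmem (Set.mem_range_self k)
  obtain ⟨Eb, hEbmem⟩ := hez.bddAbove_range
  have hEb : ∀ k, e k ≤ Eb := fun k => hEbmem (Set.mem_range_self k)
  have hyb : ∀ k, ‖y k‖ ≤ Tb + Eb + R + ‖p‖ := by
    intro k
    have h1 : ‖y k‖ ≤ ‖y k - w k‖ + ‖w k - x k‖ + ‖x k - p‖ + ‖p‖ := by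
      have : y k = (y k - w k) + (w k - x k) + (x k - p) + p := by module
      calc ‖y k‖ = ‖(y k - w k) + (w k - x k) + (x k - p) + p‖ := by rw [← this]
        _ ≤ ‖(y k - w k) + (w k - x k) + (x k - p)‖ + ‖p‖ := norm_add_le _ _
        _ ≤ ‖(y k - w k) + (w k - x k)‖ + ‖x k - p‖ + ‖p‖ := by
            have := norm_add_le ((y k - w k) + (w k - x k)) (x k - p)
            linarith
        _ ≤ ‖y k - w k‖ + ‖w k - x k‖ + ‖x k - p‖ + ‖p‖ := by
            have := norm_add_le (y k - w k) (w k - x k)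
            linarith
    have h2 : ‖y k - w k‖ ≤ Tb := by rw [norm_sub_rev]; exact hTb k
    have h3 : ‖w k - x k‖ ≤ Eb := by
      rw [hw k]
      have hh : x k + lam k • v k - x k = lam k • v k := by module
      rw [hh, norm_smul, Real.norm_eq_abs, abs_of_nonneg (hlam k)]
      exact le_trans (mul_le_mul_of_nonneg_left (hMv k) (hlam k)) (hEb k)
    linarith [hRb k]
  set Y : ℝ := Tb + Eb + R + ‖p‖ with hY
  -- weak-star machinery
  set T := InnerProductSpace.toDual ℝ H with hT
  set X : ℕ → WeakDual ℝ H := fun k => T (x k) with hX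
  set R2 := R + ‖p‖ with hR2
  have hxR2 : ∀ k, ‖x k‖ ≤ R2 := by
    intro k
    calc ‖x k‖ = ‖(x k - p) + p‖ := by congr 1; module
      _ ≤ ‖x k - p‖ + ‖p‖ := norm_add_le _ _
      _ ≤ R + ‖p‖ := add_le_add_left (hRb k) _
  set ball : Set (WeakDual ℝ H) := WeakDual.toStrongDual ⁻¹' Metric.closedBall 0 R2
    with hball
  have hballcpt : IsCompact ball := WeakDual.isCompact_closedBall (𝕜 := ℝ) 0 R2
  have hmem : ∀ k, X k ∈ ball := by
    intro k
    simp only [hball, Set.mem_preimage, Metric.mem_closedBall, dist_zero_right]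
    rw [show WeakDual.toStrongDual (X k) = T (x k) from rfl]
    rw [hT, (InnerProductSpace.toDual ℝ H).norm_map]
    exact hxR2 k
  have hmapb : map X atTop ≤ 𝓟 ball :=
    le_principal_iff.2 (mem_map.2 (Eventually.of_forall hmem))
  -- analysis of cluster points
  have hGne : ∀ (c' : WeakDual ℝ H), ClusterPt c' (map X atTop) →
      NeBot (comap X (𝓝 c') ⊓ atTop) := by
    intro c' hcl
    have h1 : NeBot (𝓝 c' ⊓ map X atTop) := hcl
    rw [← Filter.push_pull' X atTop (𝓝 c')] at h1
    exact (map_neBot_iff X).1 h1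
  have hweakG : ∀ (c' : WeakDual ℝ H), ClusterPt c' (map X atTop) →
      ∃ qh : H, T qh = c' ∧ qh ∈ C ∧ (∀ z ∈ C, 0 ≤ ⟪F qh, z - qh⟫) ∧
        ∀ u : H, Tendsto (fun k => ⟪x k, u⟫) (comap X (𝓝 c') ⊓ atTop) (𝓝 ⟪qh, u⟫) := by
    intro c' hcl
    set G : Filter ℕ := comap X (𝓝 c') ⊓ atTop with hG
    haveI hGneI : G.NeBot := hGne c' hcl
    have hGle : G ≤ atTop := inf_le_right
    have hXG : Tendsto X G (𝓝 c') := by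
      rw [hG]
      show map X (comap X (𝓝 c') ⊓ atTop) ≤ 𝓝 c'
      rw [Filter.push_pull' X atTop (𝓝 c')]
      exact inf_le_left
    set qh := T.symm c' with hqh
    have hTq : T qh = c' := by rw [hqh]; exact (InnerProductSpace.toDual ℝ H).apply_symm_apply c'
    have hweak : ∀ u : H, Tendsto (fun k => ⟪x k, u⟫) G (𝓝 ⟪qh, u⟫) := by
      intro u
      have h1 : Tendsto (fun f : WeakDual ℝ H => f u) (𝓝 c') (𝓝 (c' u)) :=
        (WeakDual.eval_continuous u).tendsto c'
      have h2 := h1.comp hXG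
      have h3 : c' u = ⟪qh, u⟫ := by rw [← hTq]; rfl
      rw [h3] at h2
      exact h2
    have hweaky : ∀ a : H, Tendsto (fun k => ⟪a, y k⟫) G (𝓝 ⟪a, qh⟫) := by
      intro a
      have h1 : Tendsto (fun k => ⟪a, x k⟫) G (𝓝 ⟪a, qh⟫) := by
        have := hweak a
        simp only [real_inner_comm] at this ⊢
        exact this
      have h2 : Tendsto (fun k => ⟪a, y k - x k⟫) G (𝓝 (0:ℝ)) := by
        have h3 : Tendsto (fun k => y k - x k) G (𝓝 0) := hyx.mono_left hGle
        have h4 : Tendsto (fun k => ⟪a, y k - x k⟫) G (𝓝 (⟪a, (0:H)⟫)) :=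
          Filter.Tendsto.inner tendsto_const_nhds h3
        simpa using h4
      have h5 := h1.add h2
      have h6 : (fun k => ⟪a, x k⟫ + ⟪a, y k - x k⟫) = fun k => ⟪a, y k⟫ := by
        funext k
        rw [← inner_add_right]
        congr 1
        module
      rw [h6] at h5
      simpa using h5
    have hqC : qh ∈ C := by
      by_contra hqnC
      obtain ⟨f, u0, hfC, hfq⟩ := geometric_hahn_banach_closed_point hCcv hCcl hqnC
      have h1 : Tendsto (fun k => f (y k)) G (𝓝 (f qh)) := by
        have h2 : Tendsto (fun k => ⟪T.symm f, y k⟫) G (𝓝 ⟪T.symm f, qh⟫) := hweaky _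
        have h3 : ∀ z : H, ⟪T.symm f, z⟫ = f z := by
          intro z
          conv_rhs => rw [← (InnerProductSpace.toDual ℝ H).apply_symm_apply f]
          rfl
        simp only [h3] at h2
        exact h2
      have h4 : f qh ≤ u0 :=
        le_of_tendsto h1 (Eventually.of_forall fun k => (hfC (y k) (hyC k)).le)
      linarith
    have hqsolpre : ∀ z ∈ C, 0 ≤ ⟪F z, z - qh⟫ := by
      intro z hz
      set D := ‖z‖ + Y with hD
      have hik : ∀ k, -((1/b + L) * D * t k) ≤ ⟪F z, z - y k⟫ := by
        intro k
        have hproj := hPchar (w k - β k • F (w k)) z hz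
        rw [← hy k] at hproj
        refine PC10.minty_step hb0 (hbβ k) hL hproj (hmono z (y k)) (hLip (w k) (y k)) ?_
        calc ‖z - y k‖ ≤ ‖z‖ + ‖y k‖ := norm_sub_le _ _
          _ ≤ ‖z‖ + Y := add_le_add_right (hyb k) _
      have hεt : Tendsto (fun k => (1/b + L) * D * t k) G (𝓝 0) := by
        have := (ht0.const_mul ((1/b + L) * D)).mono_left hGle
        simpa [mul_assoc] using this
      have hlim2 : Tendsto (fun k => ⟪F z, z - y k⟫) G (𝓝 ⟪F z, z - qh⟫) := by
        have h5 := hweaky (F z)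
        have h6 := (tendsto_const_nhds (x := ⟪F z, z⟫) (f := G)).sub h5
        simp only [← inner_sub_right] at h6
        exact h6
      have h6 : Tendsto (fun k => ⟪F z, z - y k⟫ + (1/b + L) * D * t k) G
          (𝓝 (⟪F z, z - qh⟫ + 0)) := hlim2.add hεt
      have h7 : (0:ℝ) ≤ ⟪F z, z - qh⟫ + 0 :=
        ge_of_tendsto h6 (Eventually.of_forall fun k => by linarith [hik k])
      simpa using h7
    exact ⟨qh, hTq, hqC, PC10.minty_final hCcv hLip hqC hqsolpre, hweak⟩
  -- get a cluster point
  haveI : NeBot (map X atTop) := map_neBot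
  obtain ⟨c0, hc0mem, hc0cl⟩ := hballcpt.exists_clusterPt hmapb
  obtain ⟨qh, hTq, hqC, hqsol, hweakq⟩ := hweakG c0 hc0cl
  -- uniqueness of cluster points
  have huniq : ∀ c', MapClusterPt c' atTop X → c' = c0 := by
    intro c' hc'
    have hc'cl : ClusterPt c' (map X atTop) := hc'
    obtain ⟨q2, hTq2, hq2C, hq2sol, hweak2⟩ := hweakG c' hc'cl
    obtain ⟨l1, hl1⟩ := hlim qh hqC hqsol
    obtain ⟨l2, hl2⟩ := hlim q2 hq2C hq2sol
    set m : ℕ → ℝ := fun k => ⟪x k, qh - q2⟫ with hm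
    have hmid : ∀ k, m k = (‖x k - q2‖^2 - ‖x k - qh‖^2 + ‖qh‖^2 - ‖q2‖^2)/2 := by
      intro k
      have e1 := norm_sub_sq_real (x k) q2
      have e2 := norm_sub_sq_real (x k) qh
      simp only [hm, inner_sub_right]
      linarith
    set ℓ : ℝ := (l2^2 - l1^2 + ‖qh‖^2 - ‖q2‖^2)/2 with hℓ
    have hml : Tendsto m atTop (𝓝 ℓ) := by
      have h1 : Tendsto (fun k => ‖x k - q2‖^2) atTop (𝓝 (l2^2)) := by
        have := hl2.mul hl2
        simpa [pow_two] using this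
      have h2 : Tendsto (fun k => ‖x k - qh‖^2) atTop (𝓝 (l1^2)) := by
        have := hl1.mul hl1
        simpa [pow_two] using this
      have h3 := (((h1.sub h2).add_const (‖qh‖^2)).sub_const (‖q2‖^2)).div_const 2
      have h4 : (fun k => (‖x k - q2‖^2 - ‖x k - qh‖^2 + ‖qh‖^2 - ‖q2‖^2)/2) = m := by
        funext k; rw [hmid k]
      rw [h4] at h3
      exact h3
    haveI hne1 : NeBot (comap X (𝓝 c0) ⊓ atTop) := hGne c0 hc0cl
    haveI hne2 : NeBot (comap X (𝓝 c') ⊓ atTop) := hGne c' hc'cl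
    have heq1 : ⟪qh, qh - q2⟫ = ℓ :=
      tendsto_nhds_unique (hweakq (qh - q2)) (hml.mono_left inf_le_right)
    have heq2 : ⟪q2, qh - q2⟫ = ℓ :=
      tendsto_nhds_unique (hweak2 (qh - q2)) (hml.mono_left inf_le_right)
    have hz : ⟪qh - q2, qh - q2⟫ = (0:ℝ) := by
      rw [inner_sub_left]; linarith
    have hsub : qh - q2 = 0 := inner_self_eq_zero.1 hz
    have hq2qh : q2 = qh := by
      have := sub_eq_zero.1 hsub
      exact this.symm
    rw [← hTq2, hq2qh, hTq]
  -- conclusion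
  have hconv : Tendsto X atTop (𝓝 c0) :=
    PC10.tendsto_of_unique_clusterPt hballcpt hmem huniq
  refine ⟨qh, ⟨hqC, hqsol⟩, ?_⟩
  intro u
  have h1 : Tendsto (fun f : WeakDual ℝ H => f u) (𝓝 c0) (𝓝 (c0 u)) :=
    (WeakDual.eval_continuous u).tendsto c0
  have h2 := h1.comp hconv
  have h3 : c0 u = ⟪qh, u⟫ := by rw [← hTq]; rfl
  rw [h3] at h2
  exact h2
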